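/- For any random function F: X^n → Y^m, define F̃ = Σ_m ∘ F ∘ Σ_n where Σ_n, Σ_m are independent uniformly random permutations on n and m letters respectively (independent of F). Then for any x ∈ X^n and y ∈ Y^m, Pr{F̃(x) = y} = |Y|^{-m} · α(F)(P_x, P_y), where α(F)(P,Q) = E[S_{XY}(F)(P,Q)] / S_{XY}(X^n × Y^m)(P,Q). -/

import Mathlib

set_option maxHeartbeats 1000000

open Finset Filter

open scoped Classical

noncomputable def empDist {X : Type*} [Fintype X] {n : ℕ} (x : Fin n → X) : X → ℝ :=
  fun a => ((univ.filter fun i => x i = a).card : ℝ) / n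

noncomputable def specS {X : Type*} [Fintype X] {n : ℕ}
    (A : Finset (Fin n → X)) (P : X → ℝ) : ℝ :=
  ((A.filter fun x => empDist x = P).card : ℝ) / (A.card : ℝ)

noncomputable def jointSpec {X Y : Type*} [Fintype X] [Fintype Y] {n m : ℕ}
    (f : (Fin n → X) → (Fin m → Y)) (P : X → ℝ) (Q : Y → ℝ) : ℝ :=
  ((univ.filter fun x : Fin n → X => empDist x = P ∧ empDist (f x) = Q).card : ℝ) /
    ((Fintype.card X : ℝ) ^ n)

noncomputable def fullJointSpec (X Y : Type*) [Fintype X] [Fintype Y] (n m : ℕ)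
    (P : X → ℝ) (Q : Y → ℝ) : ℝ :=
  specS (univ : Finset (Fin n → X)) P * specS (univ : Finset (Fin m → Y)) Q

noncomputable def alphaE {X Y : Type*} [Fintype X] [Fintype Y] {n m : ℕ} {Ω : Type*}
    [Fintype Ω] (μ : Ω → ℝ) (F : Ω → (Fin n → X) → (Fin m → Y))
    (P : X → ℝ) (Q : Y → ℝ) : ℝ :=
  (∑ ω, μ ω * jointSpec (F ω) P Q) / fullJointSpec X Y n m P Q

def permAct {X : Type*} {n : ℕ} (σ : Equiv.Perm (Fin n)) (x : Fin n → X) : Fin n → X :=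
  fun i => x (σ.symm i)

noncomputable def entH {X : Type*} [Fintype X] (P : X → ℝ) : ℝ :=
  ∑ a, -(P a * Real.log (P a))

noncomputable def binEnt (x : ℝ) : ℝ := -(x * Real.log x) - (1 - x) * Real.log (1 - x)

/- ### Auxiliary lemmas -/

lemma countP_sum' {ι : Type*} (p : ι → Bool) (l : List ι) :
    l.countP p = (l.map fun i => if p i then 1 else 0).sum := by
  induction l with
  | nil => simp
  | cons b t ih => by_cases h : p b <;> simp [List.countP_cons, ih, h, Nat.add_comm]

lemma count_ofFn_eq {X : Type*} [Fintype X] {n : ℕ} (x : Fin n → X) (a : X) :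
    (List.ofFn x).count a = (univ.filter fun i => x i = a).card := by
  rw [List.ofFn_eq_map, List.count_eq_countP, List.countP_map, Finset.card_filter]
  rw [Fin.univ_def]
  show _ = Multiset.sum (Multiset.map _ _)
  rw [Multiset.map_coe, Multiset.sum_coe, countP_sum']
  congr 1
  apply List.map_congr_left
  intro i _
  by_cases h : x i = a <;> simp [Function.comp, h]

lemma empDist_permAct {X : Type*} [Fintype X] {n : ℕ} (σ : Equiv.Perm (Fin n)) (x : Fin n → X) :
    empDist (permAct σ x) = empDist x := by
  funext a
  unfold empDist permAct
  congr 2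
  apply Finset.card_bij' (fun i _ => σ.symm i) (fun i _ => σ i) <;> simp

lemma exists_permAct {X : Type*} [Fintype X] {n : ℕ} {x x' : Fin n → X}
    (h : empDist x = empDist x') : ∃ σ : Equiv.Perm (Fin n), permAct σ x = x' := by
  rcases Nat.eq_zero_or_pos n with hn | hn
  · subst hn
    exact ⟨1, funext fun i => i.elim0⟩
  have hc : ∀ a, (univ.filter fun i => x i = a).card = (univ.filter fun i => x' i = a).card := by
    intro a
    have := congrFun h a
    unfold empDist at this
    have hn' : (n : ℝ) ≠ 0 := Nat.cast_ne_zero.mpr hn.ne'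
    field_simp at this
    exact_mod_cast this
  have hperm : (List.ofFn x).Perm (List.ofFn x') := by
    rw [List.perm_iff_count]
    intro a
    rw [count_ofFn_eq, count_ofFn_eq, hc]
  letI : LinearOrder X := LinearOrder.lift' (Fintype.equivFin X) (Equiv.injective _)
  set σ := Tuple.sort x
  set σ' := Tuple.sort x'
  have hmon : x ∘ σ = x' ∘ σ' := by
    apply List.ofFn_injective
    refine List.Perm.eq_of_sortedLE (Tuple.monotone_sort x).sortedLE_ofFn
      (Tuple.monotone_sort x').sortedLE_ofFn ?_
    exact ((σ.ofFn_comp_perm x).trans hperm).trans (σ'.ofFn_comp_perm x').symm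
  refine ⟨(σ'.symm.trans σ).symm, funext fun i => ?_⟩
  have := congrFun hmon (σ'.symm i)
  simpa [permAct, Function.comp] using this

lemma permAct_mul {X : Type*} {n : ℕ} (σ₀ σ : Equiv.Perm (Fin n)) (x : Fin n → X) :
    permAct (σ₀ * σ) x = permAct σ₀ (permAct σ x) := rfl

lemma permAct_one {X : Type*} {n : ℕ} (x : Fin n → X) : permAct 1 x = x := rfl

lemma fiber_card_stab {X : Type*} [Fintype X] {n : ℕ} {x x' : Fin n → X} (σ₀ : Equiv.Perm (Fin n))
    (h₀ : permAct σ₀ x = x') :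
    (univ.filter fun σ => permAct σ x = x').card
      = (univ.filter fun σ => permAct σ x = x).card := by
  apply Finset.card_bij' (fun σ _ => σ₀⁻¹ * σ) (fun σ _ => σ₀ * σ)
  · intro σ hσ
    simp only [mem_filter, mem_univ, true_and] at hσ ⊢
    rw [permAct_mul, hσ, ← h₀, ← permAct_mul, inv_mul_cancel, permAct_one]
  · intro σ hσ
    simp only [mem_filter, mem_univ, true_and] at hσ ⊢
    rw [permAct_mul, hσ, h₀]
  · intro σ _; group
  · intro σ _; group

lemma fiber_card_stab' {X : Type*} [Fintype X] {n : ℕ} {z y : Fin n → X} (τ₀ : Equiv.Perm (Fin n))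
    (h₀ : permAct τ₀ z = y) :
    (univ.filter fun τ => permAct τ z = y).card
      = (univ.filter fun τ => permAct τ y = y).card := by
  have hz : permAct τ₀⁻¹ y = z := by rw [← h₀, ← permAct_mul, inv_mul_cancel, permAct_one]
  apply Finset.card_bij' (fun τ _ => τ * τ₀⁻¹) (fun ρ _ => ρ * τ₀)
  · intro τ hτ
    simp only [mem_filter, mem_univ, true_and] at hτ ⊢
    rw [permAct_mul, hz, hτ]
  · intro ρ hρ
    simp only [mem_filter, mem_univ, true_and] at hρ ⊢
    rw [permAct_mul, h₀, hρ]
  · intro σ _; group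
  · intro σ _; group

/-- orbit-stabilizer counting. -/
lemma stab_mul_card {X : Type*} [Fintype X] {n : ℕ} (x : Fin n → X) :
    (univ.filter fun x' : Fin n → X => empDist x' = empDist x).card
        * (univ.filter fun σ : Equiv.Perm (Fin n) => permAct σ x = x).card
      = Fintype.card (Equiv.Perm (Fin n)) := by
  have hfib : ∀ x' ∈ (univ.filter fun x' : Fin n → X => empDist x' = empDist x),
      ((univ : Finset (Equiv.Perm (Fin n))).filter fun σ => permAct σ x = x').card
        = (univ.filter fun σ : Equiv.Perm (Fin n) => permAct σ x = x).card := by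
    intro x' hx'
    simp only [mem_filter, mem_univ, true_and] at hx'
    obtain ⟨σ₀, hσ₀⟩ := exists_permAct hx'.symm
    exact fiber_card_stab σ₀ hσ₀
  calc (univ.filter fun x' : Fin n → X => empDist x' = empDist x).card
        * (univ.filter fun σ : Equiv.Perm (Fin n) => permAct σ x = x).card
      = ∑ x' ∈ (univ.filter fun x' : Fin n → X => empDist x' = empDist x),
          (univ.filter fun σ : Equiv.Perm (Fin n) => permAct σ x = x).card := by
        rw [Finset.sum_const, smul_eq_mul]
    _ = ∑ x' ∈ (univ.filter fun x' : Fin n → X => empDist x' = empDist x),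
          ((univ : Finset (Equiv.Perm (Fin n))).filter fun σ => permAct σ x = x').card :=
        (Finset.sum_congr rfl hfib).symm
    _ = (univ : Finset (Equiv.Perm (Fin n))).card :=
        (Finset.card_eq_sum_card_fiberwise (fun σ _ => by simp [empDist_permAct])).symm
    _ = Fintype.card (Equiv.Perm (Fin n)) := Finset.card_univ

lemma fiberY_card {Y : Type*} [Fintype Y] {m : ℕ} (z y : Fin m → Y) :
    (univ.filter fun τ => permAct τ z = y).card
      = if empDist z = empDist y then (univ.filter fun τ => permAct τ y = y).card else 0 := by
  split_ifs with h
  · obtain ⟨τ₀, hτ₀⟩ := exists_permAct h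
    exact fiber_card_stab' τ₀ hτ₀
  · rw [Finset.card_eq_zero, Finset.filter_eq_empty_iff]
    intro τ _ hτ
    exact h (by rw [← hτ, empDist_permAct])

lemma orbit_count {X Y : Type*} [Fintype X] [Fintype Y] {n m : ℕ}
    (g : (Fin n → X) → (Fin m → Y)) (x : Fin n → X) (Q : Y → ℝ) :
    (univ.filter fun σ : Equiv.Perm (Fin n) => empDist (g (permAct σ x)) = Q).card
      = (univ.filter fun x' : Fin n → X => empDist x' = empDist x ∧ empDist (g x') = Q).card
        * (univ.filter fun σ : Equiv.Perm (Fin n) => permAct σ x = x).card := by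
  have hfib : ∀ x' ∈ (univ.filter fun x' : Fin n → X =>
      empDist x' = empDist x ∧ empDist (g x') = Q),
      ((univ.filter fun σ : Equiv.Perm (Fin n) =>
          empDist (g (permAct σ x)) = Q).filter fun σ => permAct σ x = x').card
        = (univ.filter fun σ : Equiv.Perm (Fin n) => permAct σ x = x).card := by
    intro x' hx'
    simp only [mem_filter, mem_univ, true_and] at hx'
    obtain ⟨σ₀, hσ₀⟩ := exists_permAct hx'.1.symm
    rw [← fiber_card_stab σ₀ hσ₀]
    congr 1
    rw [Finset.filter_filter]
    apply Finset.filter_congr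
    intro σ _
    constructor
    · exact fun hh => hh.2
    · intro hh
      refine ⟨?_, hh⟩
      rw [hh]
      exact hx'.2
  rw [Finset.card_eq_sum_card_fiberwise (f := fun σ => permAct σ x)
    (t := univ.filter fun x' : Fin n → X => empDist x' = empDist x ∧ empDist (g x') = Q)
    (fun σ hσ => by
      simp only [Finset.mem_coe, mem_filter, mem_univ, true_and] at hσ ⊢
      exact ⟨empDist_permAct σ x, hσ⟩)]
  rw [Finset.sum_congr rfl hfib, Finset.sum_const, smul_eq_mul]

theorem stmt4 {X Y : Type*} [Fintype X] [Fintype Y] {n m : ℕ}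
    {Ω : Type*} [Fintype Ω] (μ : Ω → ℝ) (hμ0 : ∀ ω, 0 ≤ μ ω) (hμ1 : ∑ ω, μ ω = 1)
    (F : Ω → (Fin n → X) → (Fin m → Y)) (x : Fin n → X) (y : Fin m → Y) :
    (∑ ω, ∑ σ : Equiv.Perm (Fin n), ∑ τ : Equiv.Perm (Fin m),
        μ ω / ((Fintype.card (Equiv.Perm (Fin n)) : ℝ) * (Fintype.card (Equiv.Perm (Fin m)) : ℝ)) *
          (if permAct τ (F ω (permAct σ x)) = y then 1 else 0))
      = ((Fintype.card Y : ℝ) ^ m)⁻¹ * alphaE μ F (empDist x) (empDist y) := by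
  set TPc := (univ.filter fun x' : Fin n → X => empDist x' = empDist x).card with hTPc
  set TQc := (univ.filter fun y' : Fin m → Y => empDist y' = empDist y).card with hTQc
  set sx := (univ.filter fun σ : Equiv.Perm (Fin n) => permAct σ x = x).card with hsx
  set sy := (univ.filter fun τ : Equiv.Perm (Fin m) => permAct τ y = y).card with hsy
  set J := fun ω => (univ.filter fun x' : Fin n → X =>
    empDist x' = empDist x ∧ empDist (F ω x') = empDist y).card with hJ
  -- positivity
  have hTPpos : 0 < TPc := Finset.card_pos.mpr ⟨x, by simp⟩
  have hTQpos : 0 < TQc := Finset.card_pos.mpr ⟨y, by simp⟩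
  have hsxpos : 0 < sx := Finset.card_pos.mpr ⟨1, by simp [permAct_one]⟩
  have hsypos : 0 < sy := Finset.card_pos.mpr ⟨1, by simp [permAct_one]⟩
  have hXn : (0 : ℝ) < (Fintype.card X : ℝ) ^ n := by
    have h := (Fintype.card_pos_iff (α := Fin n → X)).mpr ⟨x⟩
    rw [Fintype.card_fun, Fintype.card_fin] at h
    exact_mod_cast h
  have hYm : (0 : ℝ) < (Fintype.card Y : ℝ) ^ m := by
    have h := (Fintype.card_pos_iff (α := Fin m → Y)).mpr ⟨y⟩
    rw [Fintype.card_fun, Fintype.card_fin] at h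
    exact_mod_cast h
  have hNn : (Fintype.card (Equiv.Perm (Fin n)) : ℝ) = (TPc : ℝ) * sx := by
    rw [← stab_mul_card x]; push_cast; rfl
  have hNm : (Fintype.card (Equiv.Perm (Fin m)) : ℝ) = (TQc : ℝ) * sy := by
    rw [← stab_mul_card y]; push_cast; rfl
  -- LHS computation
  have hLHS : ∀ ω, (∑ σ : Equiv.Perm (Fin n), ∑ τ : Equiv.Perm (Fin m),
      μ ω / ((Fintype.card (Equiv.Perm (Fin n)) : ℝ) * (Fintype.card (Equiv.Perm (Fin m)) : ℝ)) *
        (if permAct τ (F ω (permAct σ x)) = y then 1 else 0))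
      = μ ω * (J ω) / ((TPc : ℝ) * TQc) := by
    intro ω
    simp_rw [← Finset.mul_sum]
    have hτ : ∀ z : Fin m → Y,
        (∑ τ : Equiv.Perm (Fin m), if permAct τ z = y then (1:ℝ) else 0)
          = if empDist z = empDist y then (sy : ℝ) else 0 := by
      intro z
      rw [Finset.sum_boole, fiberY_card z y]
      split_ifs <;> simp [hsy]
    simp_rw [hτ]
    have hite : ∀ (b : Prop) [Decidable b],
        (if b then (sy : ℝ) else 0) = (sy : ℝ) * (if b then 1 else 0) := by
      intros b _; split_ifs <;> simp
    simp_rw [hite, ← Finset.mul_sum, Finset.sum_boole]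
    have horb : ((univ.filter fun σ : Equiv.Perm (Fin n) =>
        empDist (F ω (permAct σ x)) = empDist y).card : ℝ) = (J ω : ℝ) * (sx : ℝ) := by
      have := orbit_count (F ω) x (empDist y)
      exact_mod_cast this
    rw [horb]
    rw [hNn, hNm]
    have h1 : (TPc : ℝ) ≠ 0 := by positivity
    have h2 : (TQc : ℝ) ≠ 0 := by positivity
    have h3 : (sx : ℝ) ≠ 0 := by positivity
    have h4 : (sy : ℝ) ≠ 0 := by positivity
    field_simp
  rw [Finset.sum_congr rfl (fun ω _ => hLHS ω), ← Finset.sum_div]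
  -- RHS computation
  unfold alphaE fullJointSpec specS jointSpec
  rw [Finset.card_univ, Finset.card_univ, Fintype.card_fun, Fintype.card_fun,
    Fintype.card_fin, Fintype.card_fin]
  have hsum : (∑ ω, μ ω * (((univ.filter fun x' : Fin n → X =>
      empDist x' = empDist x ∧ empDist (F ω x') = empDist y).card : ℝ) /
        ((Fintype.card X : ℝ) ^ n)))
      = (∑ ω, μ ω * (J ω)) / ((Fintype.card X : ℝ) ^ n) := by
    rw [Finset.sum_div]
    exact Finset.sum_congr rfl fun ω _ => by rw [hJ, mul_div_assoc]
  rw [hsum]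
  have h1 : (TPc : ℝ) ≠ 0 := by positivity
  have h2 : (TQc : ℝ) ≠ 0 := by positivity
  have hXn' : ((Fintype.card X : ℝ) ^ n) ≠ 0 := ne_of_gt hXn
  have hYm' : ((Fintype.card Y : ℝ) ^ m) ≠ 0 := ne_of_gt hYm
  push_cast
  field_simp
  ring
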